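/- The group presented by generators x, y, p, q, r, s with relators y⁻¹p⁻¹xp, q⁻¹xpx⁻¹, r⁻¹sqs⁻¹, s⁻¹q⁻¹pq, r⁻¹xsx⁻¹, x⁻¹s⁻¹xq⁻¹p², xy⁻¹, and xqx⁻¹q⁻¹ is isomorphic to ℤ × ℤ (equivalently, to the presented group ⟨x, q | [x, q]⟩), with x and q mapping to the two generators. -/

import Mathlib

/-- Generators `x, y, p, q, r, s` indexed by `Fin 6` in that order. -/
def whRels : Set (FreeGroup (Fin 6)) :=
  letI x := FreeGroup.of (0 : Fin 6)
  letI y := FreeGroup.of (1 : Fin 6)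
  letI p := FreeGroup.of (2 : Fin 6)
  letI q := FreeGroup.of (3 : Fin 6)
  letI r := FreeGroup.of (4 : Fin 6)
  letI s := FreeGroup.of (5 : Fin 6)
  { y⁻¹ * p⁻¹ * x * p,
    q⁻¹ * x * p * x⁻¹,
    r⁻¹ * s * q * s⁻¹,
    s⁻¹ * q⁻¹ * p * q,
    r⁻¹ * x * s * x⁻¹,
    x⁻¹ * s⁻¹ * x * q⁻¹ * p ^ 2,
    x * y⁻¹,
    x * q * x⁻¹ * q⁻¹ }

namespace WhAux

abbrev M := Multiplicative ℤ × Multiplicative ℤ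

def fn : Fin 6 → M
  | 0 => (Multiplicative.ofAdd 1, 1)
  | 1 => (Multiplicative.ofAdd 1, 1)
  | 2 => (1, Multiplicative.ofAdd 1)
  | 3 => (1, Multiplicative.ofAdd 1)
  | 4 => (1, Multiplicative.ofAdd 1)
  | 5 => (1, Multiplicative.ofAdd 1)

lemma fn_rels : ∀ r ∈ whRels, FreeGroup.lift fn r = 1 := by
  intro r hr
  simp only [whRels, Set.mem_insert_iff, Set.mem_singleton_iff] at hr
  rcases hr with h|h|h|h|h|h|h|h <;> subst h <;>
    simp [fn, Prod.ext_iff, ← ofAdd_neg, ← ofAdd_add] <;> decide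

lemma rel_one {r : FreeGroup (Fin 6)} (h : r ∈ whRels) :
    PresentedGroup.mk whRels r = 1 :=
  (QuotientGroup.eq_one_iff r).mpr (Subgroup.subset_normalClosure h)

local notation "X" => (PresentedGroup.of (rels := whRels) (0 : Fin 6))
local notation "Y" => (PresentedGroup.of (rels := whRels) (1 : Fin 6))
local notation "P" => (PresentedGroup.of (rels := whRels) (2 : Fin 6))
local notation "Q" => (PresentedGroup.of (rels := whRels) (3 : Fin 6))
local notation "R" => (PresentedGroup.of (rels := whRels) (4 : Fin 6))
local notation "S" => (PresentedGroup.of (rels := whRels) (5 : Fin 6))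

lemma r7 : X * Y⁻¹ = 1 := by
  have := rel_one (r := FreeGroup.of 0 * (FreeGroup.of 1)⁻¹) (by simp [whRels])
  simpa [PresentedGroup.of] using this

lemma r1 : Y⁻¹ * P⁻¹ * X * P = 1 := by
  have := rel_one (r := (FreeGroup.of 1)⁻¹ * (FreeGroup.of 2)⁻¹ * FreeGroup.of 0 * FreeGroup.of 2)
    (by simp [whRels])
  simpa [PresentedGroup.of] using this

lemma r2 : Q⁻¹ * X * P * X⁻¹ = 1 := by
  have := rel_one (r := (FreeGroup.of 3)⁻¹ * FreeGroup.of 0 * FreeGroup.of 2 * (FreeGroup.of 0)⁻¹)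
    (by simp [whRels])
  simpa [PresentedGroup.of] using this

lemma r8 : X * Q * X⁻¹ * Q⁻¹ = 1 := by
  have := rel_one (r := FreeGroup.of 0 * FreeGroup.of 3 * (FreeGroup.of 0)⁻¹ * (FreeGroup.of 3)⁻¹)
    (by simp [whRels])
  simpa [PresentedGroup.of] using this

lemma hYX : Y = X := (mul_inv_eq_one.mp r7).symm

lemma hXP : X * P = P * X := by
  have h1 : Y⁻¹ * (P⁻¹ * (X * P)) = 1 := by rw [← r1]; group
  rw [hYX] at h1
  have h2 : X = P⁻¹ * (X * P) := inv_mul_eq_one.mp h1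
  exact (eq_inv_mul_iff_mul_eq.mp h2).symm

lemma hQP : Q = P := by
  have h1 : Q⁻¹ * (X * P * X⁻¹) = 1 := by rw [← r2]; group
  have h2 : Q = X * P * X⁻¹ := inv_mul_eq_one.mp h1
  rw [h2, hXP]; group

lemma r3 : R⁻¹ * S * Q * S⁻¹ = 1 := by
  have := rel_one (r := (FreeGroup.of 4)⁻¹ * FreeGroup.of 5 * FreeGroup.of 3 * (FreeGroup.of 5)⁻¹)
    (by simp [whRels])
  simpa [PresentedGroup.of] using this

lemma r4 : S⁻¹ * Q⁻¹ * P * Q = 1 := by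
  have := rel_one (r := (FreeGroup.of 5)⁻¹ * (FreeGroup.of 3)⁻¹ * FreeGroup.of 2 * FreeGroup.of 3)
    (by simp [whRels])
  simpa [PresentedGroup.of] using this

lemma hSQ : S = Q := by
  have h1 : S⁻¹ * (Q⁻¹ * (P * Q)) = 1 := by rw [← r4]; group
  have h2 : S = Q⁻¹ * (P * Q) := inv_mul_eq_one.mp h1
  rw [h2, ← hQP]; group

lemma hRQ : R = Q := by
  have h1 : R⁻¹ * (S * Q * S⁻¹) = 1 := by rw [← r3]; group
  have h2 : R = S * Q * S⁻¹ := inv_mul_eq_one.mp h1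
  rw [h2, hSQ]; group

lemma hXQ : Commute X Q := by
  have h1 : (X * Q) * (Q * X)⁻¹ = 1 := by rw [← r8]; group
  have := mul_inv_eq_one.mp h1
  exact this

noncomputable def f : PresentedGroup whRels →* M := PresentedGroup.toGroup fn_rels

def g : M →* PresentedGroup whRels :=
  MonoidHom.mk' (fun ab => X ^ ab.1.toAdd * Q ^ ab.2.toAdd) (by
    rintro ⟨a1, b1⟩ ⟨a2, b2⟩
    simp only [Prod.fst_mul, Prod.snd_mul, toAdd_mul, zpow_add]
    have h := (hXQ.zpow_zpow a2.toAdd b1.toAdd).eq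
    rw [mul_assoc, ← mul_assoc (X ^ a2.toAdd), h]
    group)

lemma gf : g.comp f = MonoidHom.id _ := by
  ext i
  fin_cases i <;>
    simp only [MonoidHom.comp_apply, MonoidHom.id_apply, f, PresentedGroup.toGroup.of, fn,
      Matrix.cons_val_zero, Matrix.cons_val_one, Matrix.head_cons, g, MonoidHom.mk'_apply]
  · simp
  · simp [hYX]
  · simp [← hQP]
  · simp
  · simp [Matrix.cons_val_succ, hRQ]
  · simp [Matrix.cons_val_succ, hSQ]

lemma fg_apply : ∀ z : M, f (g z) = z := by
  rintro ⟨a, b⟩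
  have hx : f X = ((Multiplicative.ofAdd 1 : Multiplicative ℤ), (1 : Multiplicative ℤ)) := by
    simp [f, fn]
  have hq : f Q = ((1 : Multiplicative ℤ), (Multiplicative.ofAdd 1 : Multiplicative ℤ)) := by
    simp [f, fn]
  simp only [g, MonoidHom.mk'_apply, map_mul, map_zpow, hx, hq]
  ext <;> simp [← ofAdd_zsmul]

end WhAux

/-- The presented group with the Wirtinger relators of the Whitehead link,
together with the Dehn-filling and 2-handle relators, is isomorphic to
`ℤ × ℤ`, with `x` and `q` mapping to the two generators. -/
theorem whitehead_presentation_iso_int_prod_int :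
    ∃ e : PresentedGroup whRels ≃* (Multiplicative ℤ × Multiplicative ℤ),
      e (PresentedGroup.of (0 : Fin 6)) = (Multiplicative.ofAdd 1, 1) ∧
      e (PresentedGroup.of (3 : Fin 6)) = (1, Multiplicative.ofAdd 1) := by
  refine ⟨{ toFun := WhAux.f, invFun := WhAux.g,
            left_inv := fun a => by
              simpa using DFunLike.congr_fun WhAux.gf a
            right_inv := WhAux.fg_apply,
            map_mul' := map_mul _ }, ?_, ?_⟩ <;>
    simp [WhAux.f, WhAux.fn]
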